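/- Let m ≥ 2 and let y, z be unit vectors in ℝ^m. If w is distributed according to the uniform (normalized surface) probability measure on the unit sphere S^{m−1} ⊆ ℝ^m, then E[sgn(⟨y,w⟩)·sgn(⟨z,w⟩)] = (2/π)·arcsin(⟨y,z⟩), where sgn(t) = 1 if t ≥ 0 and sgn(t) = −1 if t < 0. -/

import Mathlib

open MeasureTheory Metric
open scoped RealInnerProductSpace

/-- The sign function `sgn(t) = 1` if `t ≥ 0` and `-1` if `t < 0`. -/
noncomputable def sgn (t : ℝ) : ℝ := if 0 ≤ t then 1 else -1

/-- The uniform (normalized surface) probability measure on the unit sphere of `ℝᵐ`. -/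
noncomputable def uniformSphereMeasure (m : ℕ) :
    Measure (sphere (0 : EuclideanSpace ℝ (Fin m)) 1) :=
  ((volume : Measure (EuclideanSpace ℝ (Fin m))).toSphere Set.univ)⁻¹ •
    (volume : Measure (EuclideanSpace ℝ (Fin m))).toSphere

open Real Set Filter

lemma sgn_of_nonneg {t : ℝ} (h : 0 ≤ t) : sgn t = 1 := if_pos h
lemma sgn_of_neg {t : ℝ} (h : t < 0) : sgn t = -1 := if_neg (not_le.2 h)
lemma abs_sgn (t : ℝ) : |sgn t| = 1 := by unfold sgn; split <;> simp
lemma measurable_sgn : Measurable sgn :=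
  Measurable.ite (measurableSet_le measurable_const measurable_id) measurable_const
    measurable_const
lemma sgn_mul_pos {c : ℝ} (hc : 0 < c) (t : ℝ) : sgn (c * t) = sgn t := by
  unfold sgn
  rcases le_or_gt 0 t with h | h
  · rw [if_pos (mul_nonneg hc.le h), if_pos h]
  · rw [if_neg (not_le.2 (mul_neg_of_pos_of_neg hc h)), if_neg (not_le.2 h)]
lemma sgn_self_mul (t : ℝ) : sgn t * sgn t = 1 := by unfold sgn; split <;> norm_num

lemma radial_integral : ∫ r in Ioi (0:ℝ), r * Real.exp (-π * r^2) = (2*π)⁻¹ := by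
  have A : ∀ x : ℝ, HasDerivAt (fun t => -(2*π)⁻¹ * Real.exp (-π * t^2))
      (x * Real.exp (-π*x^2)) x := by
    intro x
    have h1 : HasDerivAt (fun t : ℝ => -π * t^2) (-π * (2*x)) x := by
      simpa using ((hasDerivAt_pow 2 x).const_mul (-π))
    have h2 := (h1.exp).const_mul (-(2*π)⁻¹)
    refine h2.congr_deriv ?_
    have : π ≠ 0 := pi_ne_zero
    field_simp
  have tends : Tendsto (fun t => -(2*π)⁻¹ * Real.exp (-π * t^2)) atTop (nhds 0) := by
    have h3 : Tendsto (fun t:ℝ => t^2) atTop atTop := tendsto_pow_atTop two_ne_zero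
    have h4 : Tendsto (fun t:ℝ => π * t^2) atTop atTop := h3.const_mul_atTop pi_pos
    have h5 : Tendsto (fun t:ℝ => -π * t^2) atTop atBot := by
      have := tendsto_neg_atTop_atBot.comp h4
      refine this.congr fun t => by show -(π * t^2) = -π * t^2; ring
    have h6 : Tendsto (fun t:ℝ => Real.exp (-π * t^2)) atTop (nhds 0) :=
      Real.tendsto_exp_atBot.comp h5
    simpa using h6.const_mul (-(2*π)⁻¹)
  have key := integral_Ioi_of_hasDerivAt_of_tendsto' (a := 0) (fun x _ => A x)
    ((integrable_mul_exp_neg_mul_sq pi_pos).integrableOn) tends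
  refine key.trans ?_
  simp

lemma intervalIntegrable_of_bounded {h : ℝ → ℝ} (hm : Measurable h) (hb : ∀ x, |h x| ≤ 1)
    (a b : ℝ) : IntervalIntegrable h volume a b := by
  rw [intervalIntegrable_iff]
  refine Measure.integrableOn_of_bounded (M := 1) ?_ hm.aestronglyMeasurable
    (ae_of_all _ fun x => by rw [Real.norm_eq_abs]; exact hb x)
  exact (measure_Ioc_lt_top).ne

lemma integral_const_of_Ioo {h : ℝ → ℝ} {a b c : ℝ} (hab : a ≤ b)
    (hc : ∀ x ∈ Ioo a b, h x = c) :
    ∫ x in a..b, h x = c * (b - a) := by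
  rw [intervalIntegral.integral_of_le hab, MeasureTheory.integral_Ioc_eq_integral_Ioo,
      setIntegral_congr_fun measurableSet_Ioo hc, setIntegral_const, Real.volume_real_Ioo_of_le hab,
      smul_eq_mul, mul_comm]

lemma cos_pos' {x : ℝ} (h1 : -(π/2) < x) (h2 : x < π/2) : 0 < Real.cos x :=
  Real.cos_pos_of_mem_Ioo ⟨h1, h2⟩
lemma cos_neg'' {x : ℝ} (h1 : π/2 < x) (h2 : x < 3*π/2) : Real.cos x < 0 :=
  Real.cos_neg_of_pi_div_two_lt_of_lt h1 (by linarith)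
lemma cos_neg''' {x : ℝ} (h1 : -(3*π/2) < x) (h2 : x < -(π/2)) : Real.cos x < 0 := by
  rw [← Real.cos_neg]
  exact cos_neg'' (by linarith) (by linarith)
lemma cos_pos''' {x : ℝ} (h1 : -(2*π) < x) (h2 : x < -(3*π/2)) : 0 < Real.cos x := by
  rw [← Real.cos_add_two_pi]
  exact cos_pos' (by linarith [Real.pi_pos]) (by linarith [Real.pi_pos])

lemma trig_integral {α : ℝ} (h0 : 0 < α) (hπ : α ≤ π) :
    ∫ θ in (-π)..π, sgn (Real.cos θ) * sgn (Real.cos (θ - α)) = 2*π - 4*α := by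
  have hpi := Real.pi_pos
  set h : ℝ → ℝ := fun θ => sgn (Real.cos θ) * sgn (Real.cos (θ - α)) with hh
  have hm : Measurable h :=
    (measurable_sgn.comp Real.measurable_cos).mul
      (measurable_sgn.comp (Real.measurable_cos.comp (measurable_id.sub_const α)))
  have hb : ∀ x, |h x| ≤ 1 := fun x => by rw [hh]; simp [abs_mul, abs_sgn]
  have hint : ∀ a b : ℝ, IntervalIntegrable h volume a b :=
    intervalIntegrable_of_bounded hm hb
  rcases le_or_gt α (π/2) with hα | hα
  · have e : (∫ x in (-π)..(-(π/2)), h x) + ((∫ x in (-(π/2))..(α-π/2), h x) +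
        ((∫ x in (α-π/2)..(π/2), h x) + ((∫ x in (π/2)..(α+π/2), h x) +
        (∫ x in (α+π/2)..π, h x)))) = ∫ x in (-π)..π, h x := by
      rw [intervalIntegral.integral_add_adjacent_intervals (hint (π/2) (α+π/2)) (hint (α+π/2) π),
          intervalIntegral.integral_add_adjacent_intervals (hint (α-π/2) (π/2)) (hint (π/2) π),
          intervalIntegral.integral_add_adjacent_intervals (hint (-(π/2)) (α-π/2)) (hint (α-π/2) π),
          intervalIntegral.integral_add_adjacent_intervals (hint (-π) (-(π/2))) (hint (-(π/2)) π)]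
    rw [← e]
    have p1 : ∫ x in (-π)..(-(π/2)), h x = 1 * ((-(π/2)) - (-π)) := by
      refine integral_const_of_Ioo (by linarith) fun x hx => ?_
      show sgn (Real.cos x) * sgn (Real.cos (x - α)) = _
      rw [sgn_of_neg (cos_neg''' (by linarith [hx.1]) hx.2),
          sgn_of_neg (cos_neg''' (by linarith [hx.1]) (by linarith [hx.2]))]
      norm_num
    have p2 : ∫ x in (-(π/2))..(α-π/2), h x = (-1) * ((α-π/2) - (-(π/2))) := by
      refine integral_const_of_Ioo (by linarith) fun x hx => ?_
      show sgn (Real.cos x) * sgn (Real.cos (x - α)) = _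
      rw [sgn_of_nonneg (cos_pos' hx.1 (by linarith [hx.2])).le,
          sgn_of_neg (cos_neg''' (by linarith [hx.1]) (by linarith [hx.2]))]
      norm_num
    have p3 : ∫ x in (α-π/2)..(π/2), h x = 1 * ((π/2) - (α-π/2)) := by
      refine integral_const_of_Ioo (by linarith) fun x hx => ?_
      show sgn (Real.cos x) * sgn (Real.cos (x - α)) = _
      rw [sgn_of_nonneg (cos_pos' (by linarith [hx.1]) hx.2).le,
          sgn_of_nonneg (cos_pos' (by linarith [hx.1]) (by linarith [hx.2])).le]
      norm_num
    have p4 : ∫ x in (π/2)..(α+π/2), h x = (-1) * ((α+π/2) - (π/2)) := by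
      refine integral_const_of_Ioo (by linarith) fun x hx => ?_
      show sgn (Real.cos x) * sgn (Real.cos (x - α)) = _
      rw [sgn_of_neg (cos_neg'' hx.1 (by linarith [hx.2])),
          sgn_of_nonneg (cos_pos' (by linarith [hx.1]) (by linarith [hx.2])).le]
      norm_num
    have p5 : ∫ x in (α+π/2)..π, h x = 1 * (π - (α+π/2)) := by
      refine integral_const_of_Ioo (by linarith) fun x hx => ?_
      show sgn (Real.cos x) * sgn (Real.cos (x - α)) = _
      rw [sgn_of_neg (cos_neg'' (by linarith [hx.1]) (by linarith [hx.2])),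
          sgn_of_neg (cos_neg'' (by linarith [hx.1]) (by linarith [hx.2]))]
      norm_num
    rw [p1, p2, p3, p4, p5]
    ring
  · have e : (∫ x in (-π)..(α-3*π/2), h x) + ((∫ x in (α-3*π/2)..(-(π/2)), h x) +
        ((∫ x in (-(π/2))..(α-π/2), h x) + ((∫ x in (α-π/2)..(π/2), h x) +
        (∫ x in (π/2)..π, h x)))) = ∫ x in (-π)..π, h x := by
      rw [intervalIntegral.integral_add_adjacent_intervals (hint (α-π/2) (π/2)) (hint (π/2) π),
          intervalIntegral.integral_add_adjacent_intervals (hint (-(π/2)) (α-π/2)) (hint (α-π/2) π),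
          intervalIntegral.integral_add_adjacent_intervals (hint (α-3*π/2) (-(π/2))) (hint (-(π/2)) π),
          intervalIntegral.integral_add_adjacent_intervals (hint (-π) (α-3*π/2)) (hint (α-3*π/2) π)]
    rw [← e]
    have q1 : ∫ x in (-π)..(α-3*π/2), h x = (-1) * ((α-3*π/2) - (-π)) := by
      refine integral_const_of_Ioo (by linarith) fun x hx => ?_
      show sgn (Real.cos x) * sgn (Real.cos (x - α)) = _
      rw [sgn_of_neg (cos_neg''' (by linarith [hx.1]) (by linarith [hx.2])),
          sgn_of_nonneg (cos_pos''' (by linarith [hx.1]) (by linarith [hx.2])).le]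
      norm_num
    have q2 : ∫ x in (α-3*π/2)..(-(π/2)), h x = 1 * ((-(π/2)) - (α-3*π/2)) := by
      refine integral_const_of_Ioo (by linarith) fun x hx => ?_
      show sgn (Real.cos x) * sgn (Real.cos (x - α)) = _
      rw [sgn_of_neg (cos_neg''' (by linarith [hx.1]) hx.2),
          sgn_of_neg (cos_neg''' (by linarith [hx.1]) (by linarith [hx.2]))]
      norm_num
    have q3 : ∫ x in (-(π/2))..(α-π/2), h x = (-1) * ((α-π/2) - (-(π/2))) := by
      refine integral_const_of_Ioo (by linarith) fun x hx => ?_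
      show sgn (Real.cos x) * sgn (Real.cos (x - α)) = _
      rw [sgn_of_nonneg (cos_pos' hx.1 (by linarith [hx.2])).le,
          sgn_of_neg (cos_neg''' (by linarith [hx.1]) (by linarith [hx.2]))]
      norm_num
    have q4 : ∫ x in (α-π/2)..(π/2), h x = 1 * ((π/2) - (α-π/2)) := by
      refine integral_const_of_Ioo (by linarith) fun x hx => ?_
      show sgn (Real.cos x) * sgn (Real.cos (x - α)) = _
      rw [sgn_of_nonneg (cos_pos' (by linarith [hx.1]) hx.2).le,
          sgn_of_nonneg (cos_pos' (by linarith [hx.1]) (by linarith [hx.2])).le]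
      norm_num
    have q5 : ∫ x in (π/2)..π, h x = (-1) * (π - π/2) := by
      refine integral_const_of_Ioo (by linarith) fun x hx => ?_
      show sgn (Real.cos x) * sgn (Real.cos (x - α)) = _
      rw [sgn_of_neg (cos_neg'' hx.1 (by linarith [hx.2])),
          sgn_of_nonneg (cos_pos' (by linarith [hx.1]) (by linarith [hx.2])).le]
      norm_num
    rw [q1, q2, q3, q4, q5]
    ring

lemma marginalize (K : (ℝ × ℝ) → ℝ) :
    ∀ k : ℕ, ∫ u : Fin (k+2) → ℝ, K (u 0, u 1) * ∏ i, Real.exp (-π * (u i)^2)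
      = ∫ u : Fin 2 → ℝ, K (u 0, u 1) * ∏ i, Real.exp (-π * (u i)^2) := by
  intro k
  induction k with
  | zero => rfl
  | succ n ih =>
    rw [← ih]
    have hmp := volume_preserving_piFinSuccAbove (fun _ : Fin (n+3) => ℝ) (Fin.last (n+2))
    have htr := hmp.integral_comp (MeasurableEquiv.measurableEmbedding _)
      (fun p : ℝ × (Fin (n+2) → ℝ) =>
        Real.exp (-π * p.1^2) * (K (p.2 0, p.2 1) * ∏ i, Real.exp (-π * (p.2 i)^2)))
    refine Eq.trans ?_ (htr.trans ?_)
    · refine integral_congr_ae (Filter.Eventually.of_forall fun x => ?_)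
      show K (x 0, x 1) * ∏ i, Real.exp (-π * (x i)^2)
          = Real.exp (-π * (x (Fin.last (n+2)))^2) *
            (K (x (Fin.succAbove (Fin.last (n+2)) 0), x (Fin.succAbove (Fin.last (n+2)) 1)) *
              ∏ i : Fin (n+2), Real.exp (-π * (x (Fin.succAbove (Fin.last (n+2)) i))^2))
      rw [Fin.prod_univ_castSucc (f := fun i : Fin (n+3) => Real.exp (-π * (x i)^2))]
      simp only [Fin.succAbove_last]
      have e0 : (Fin.castSucc (0 : Fin (n+2))) = (0 : Fin (n+3)) := rfl
      have e1 : (Fin.castSucc (1 : Fin (n+2))) = (1 : Fin (n+3)) := rfl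
      rw [e0, e1]
      ring
    · rw [Measure.volume_eq_prod, integral_prod_mul (f := fun a : ℝ => Real.exp (-π*a^2))
        (g := fun v : Fin (n+2) → ℝ => K (v 0, v 1) * ∏ i, Real.exp (-π * (v i)^2))]
      rw [integral_gaussian, div_self pi_ne_zero, Real.sqrt_one, one_mul]

lemma uniform_eq_gaussian {m : ℕ} (hm : 0 < m) (F : EuclideanSpace ℝ (Fin m) → ℝ)
    (hFh : ∀ r : ℝ, 0 < r → ∀ x, F (r • x) = F x) :
    ∫ w : sphere (0 : EuclideanSpace ℝ (Fin m)) 1, F ↑w ∂(uniformSphereMeasure m)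
      = ∫ x, F x * Real.exp (-π * ‖x‖^2) := by
  have hE : Nontrivial (EuclideanSpace ℝ (Fin m)) :=
    Module.nontrivial_of_finrank_pos (R := ℝ) (by rw [finrank_euclideanSpace_fin]; omega)
  let E := EuclideanSpace ℝ (Fin m)
  set c : ℝ := ∫ r : Set.Ioi (0:ℝ), Real.exp (-π * (r:ℝ)^2)
      ∂(Measure.volumeIoiPow (Module.finrank ℝ E - 1)) with hc
  have key : ∀ G : E → ℝ, (∀ r:ℝ, 0 < r → ∀ x, G (r•x) = G x) →
      ∫ x, G x * Real.exp (-π * ‖x‖^2)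
        = (∫ w : sphere (0:E) 1, G ↑w ∂((volume : Measure E).toSphere)) * c := by
    intro G hGh
    have h1 : ∫ x, G x * Real.exp (-π*‖x‖^2)
        = ∫ x : ({0}ᶜ : Set E), G ↑x * Real.exp (-π*‖(x : E)‖^2)
            ∂((volume : Measure E).comap Subtype.val) := by
      rw [integral_subtype_comap (measurableSet_singleton (0:E)).compl
          (fun z : E => G z * Real.exp (-π * ‖z‖^2)),
        MeasureTheory.restrict_compl_singleton (0:E)]
    have h2 := (volume : Measure E).measurePreserving_homeomorphUnitSphereProd.integral_comp
      (Homeomorph.measurableEmbedding _)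
      (fun p : sphere (0:E) 1 × Set.Ioi (0:ℝ) => G ↑p.1 * Real.exp (-π * (p.2:ℝ)^2))
    have h4 : ∫ x : ({0}ᶜ : Set E), G ↑x * Real.exp (-π*‖(x : E)‖^2)
            ∂((volume : Measure E).comap Subtype.val)
        = ∫ p : sphere (0:E) 1 × Set.Ioi (0:ℝ), G ↑p.1 * Real.exp (-π * (p.2:ℝ)^2)
            ∂((volume : Measure E).toSphere.prod
              (Measure.volumeIoiPow (Module.finrank ℝ E - 1))) := by
      rw [← h2]
      refine integral_congr_ae (Filter.Eventually.of_forall (fun x : ({0}ᶜ : Set E) => ?_))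
      show G ↑x * Real.exp (-π*‖(x:E)‖^2)
        = G ↑((homeomorphUnitSphereProd E) x).1
          * Real.exp (-π * (((homeomorphUnitSphereProd E) x).2 : ℝ)^2)
      have hx : (x : E) ≠ 0 := x.2
      have hnorm : (0:ℝ) < ‖(x:E)‖ := norm_pos_iff.2 hx
      rw [homeomorphUnitSphereProd_apply_fst_coe, homeomorphUnitSphereProd_apply_snd_coe]
      rw [hGh _ (by positivity : (0:ℝ) < ‖(x:E)‖⁻¹) (x:E)]
    rw [h1, h4, integral_prod_mul
        (f := fun w : sphere (0:E) 1 => G ↑w)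
        (g := fun r : Set.Ioi (0:ℝ) => Real.exp (-π * (r:ℝ)^2))]
  have hone : ((volume : Measure E).toSphere Set.univ).toReal * c = 1 := by
    have h3 := key (fun _ => 1) (fun r hr x => rfl)
    simp only [one_mul] at h3
    rw [GaussianFourier.integral_rexp_neg_mul_sq_norm pi_pos] at h3
    rw [div_self pi_ne_zero, Real.one_rpow, integral_const, smul_eq_mul, mul_one] at h3
    exact h3.symm
  have hTfin : (volume : Measure E).toSphere Set.univ ≠ ⊤ := measure_ne_top _ _
  have hTR : (((volume : Measure E).toSphere Set.univ).toReal) ≠ 0 := by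
    intro h0
    rw [h0, zero_mul] at hone
    exact zero_ne_one hone
  have hcT : c = (((volume : Measure E).toSphere Set.univ).toReal)⁻¹ := by
    have := eq_inv_of_mul_eq_one_left ((mul_comm _ _).trans hone)
    simpa using this
  rw [uniformSphereMeasure, integral_smul_measure, key F hFh, ENNReal.toReal_inv, smul_eq_mul,
    hcT]
  ring

/-- The 2-dimensional Gaussian computation. -/
lemma gaussian_2d {ρ s : ℝ} (hρ1 : -1 < ρ) (hρ2 : ρ < 1) (hs : s = Real.sqrt (1 - ρ^2)) :
    ∫ p : ℝ × ℝ, (sgn p.1 * sgn (ρ * p.1 + s * p.2)) *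
        (Real.exp (-π * p.1^2) * Real.exp (-π * p.2^2))
      = (2 / π) * Real.arcsin ρ := by
  have hpi := Real.pi_pos
  set α := Real.arccos ρ with hα
  have hα0 : 0 < α := Real.arccos_pos.2 hρ2
  have hαπ : α ≤ π := Real.arccos_le_pi ρ
  have hcosα : Real.cos α = ρ := Real.cos_arccos hρ1.le hρ2.le
  have hsinα : Real.sin α = s := by rw [hα, Real.sin_arccos, hs]
  have hpolar := integral_comp_polarCoord_symm
    (fun p : ℝ × ℝ => (sgn p.1 * sgn (ρ * p.1 + s * p.2)) *
        (Real.exp (-π * p.1^2) * Real.exp (-π * p.2^2)))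
  rw [← hpolar, polarCoord_target]
  have hEq : EqOn
      (fun p : ℝ × ℝ => p.1 • ((fun p : ℝ × ℝ => (sgn p.1 * sgn (ρ * p.1 + s * p.2)) *
        (Real.exp (-π * p.1^2) * Real.exp (-π * p.2^2))) (polarCoord.symm p)))
      (fun p : ℝ × ℝ => (p.1 * Real.exp (-π * p.1^2)) *
        (sgn (Real.cos p.2) * sgn (Real.cos (p.2 - α))))
      (Ioi (0:ℝ) ×ˢ Ioo (-π) π) := by
    rintro ⟨r, θ⟩ ⟨hr, hθ⟩
    simp only [polarCoord_symm_apply, smul_eq_mul]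
    have hr' : (0:ℝ) < r := hr
    have e1 : sgn (r * Real.cos θ) = sgn (Real.cos θ) := sgn_mul_pos hr' _
    have e2 : ρ * (r * Real.cos θ) + s * (r * Real.sin θ)
        = r * (Real.cos (θ - α)) := by
      rw [Real.cos_sub, hcosα, hsinα]; ring
    have e3 : Real.exp (-π * (r * Real.cos θ)^2) * Real.exp (-π * (r * Real.sin θ)^2)
        = Real.exp (-π * r^2) := by
      rw [← Real.exp_add]
      congr 1
      have := Real.sin_sq_add_cos_sq θ
      linear_combination (-π * r^2) * this
    rw [e1, e2, sgn_mul_pos hr', e3]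
    ring
  rw [setIntegral_congr_fun (measurableSet_Ioi.prod measurableSet_Ioo) hEq,
    Measure.volume_eq_prod,
    setIntegral_prod_mul (f := fun r : ℝ => r * Real.exp (-π * r^2))
      (g := fun θ : ℝ => sgn (Real.cos θ) * sgn (Real.cos (θ - α))), radial_integral]
  have hang : ∫ θ in Ioo (-π) π, sgn (Real.cos θ) * sgn (Real.cos (θ - α))
      = 2*π - 4*α := by
    rw [← MeasureTheory.integral_Ioc_eq_integral_Ioo,
      ← intervalIntegral.integral_of_le (by linarith)]
    exact trig_integral hα0 hαπ
  rw [hang]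
  have harcsin : Real.arcsin ρ = π/2 - α := by rw [hα, Real.arccos]; ring
  rw [harcsin]
  field_simp
  ring

set_option maxHeartbeats 2000000 in
/-- **Grothendieck identity.** For unit vectors `y, z ∈ ℝᵐ` (`m ≥ 2`) and `w` uniformly
distributed on the unit sphere `S^{m-1}`,
`E[sgn⟨y,w⟩ · sgn⟨z,w⟩] = (2/π)·arcsin⟨y,z⟩`. -/
theorem grothendieck_identity (m : ℕ) (hm : 2 ≤ m)
    (y z : EuclideanSpace ℝ (Fin m)) (hy : ‖y‖ = 1) (hz : ‖z‖ = 1) :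
    ∫ w : sphere (0 : EuclideanSpace ℝ (Fin m)) 1,
        sgn ⟪y, (w : EuclideanSpace ℝ (Fin m))⟫ * sgn ⟪z, (w : EuclideanSpace ℝ (Fin m))⟫
        ∂(uniformSphereMeasure m) =
      (2 / Real.pi) * Real.arcsin ⟪y, z⟫ := by
  obtain ⟨k, rfl⟩ : ∃ k, m = k + 2 := ⟨m - 2, by omega⟩
  have hpi := Real.pi_pos
  set ρ : ℝ := ⟪y, z⟫ with hρ
  have hρabs : |ρ| ≤ 1 := by
    have := abs_real_inner_le_norm y z
    rwa [hy, hz, one_mul] at this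
  have hρ1 : -1 ≤ ρ := (abs_le.1 hρabs).1
  have hρ2 : ρ ≤ 1 := (abs_le.1 hρabs).2
  set F : EuclideanSpace ℝ (Fin (k+2)) → ℝ := fun x => sgn ⟪y, x⟫ * sgn ⟪z, x⟫ with hF
  have hFh : ∀ r : ℝ, 0 < r → ∀ x, F (r • x) = F x := by
    intro r hr x
    show sgn ⟪y, r • x⟫ * sgn ⟪z, r • x⟫ = sgn ⟪y, x⟫ * sgn ⟪z, x⟫
    rw [real_inner_smul_right, real_inner_smul_right, sgn_mul_pos hr, sgn_mul_pos hr]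
  have hA := uniform_eq_gaussian (by omega) F hFh
  rw [show (∫ w : sphere (0 : EuclideanSpace ℝ (Fin (k+2))) 1,
      sgn ⟪y, (w : EuclideanSpace ℝ (Fin (k+2)))⟫ * sgn ⟪z, (w : EuclideanSpace ℝ (Fin (k+2)))⟫
      ∂(uniformSphereMeasure (k+2)))
    = ∫ w : sphere (0 : EuclideanSpace ℝ (Fin (k+2))) 1, F ↑w ∂(uniformSphereMeasure (k+2))
    from rfl, hA]
  have gauss_total : ∫ x : EuclideanSpace ℝ (Fin (k+2)), Real.exp (-π * ‖x‖^2) = 1 := by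
    rw [GaussianFourier.integral_rexp_neg_mul_sq_norm pi_pos, div_self pi_ne_zero, Real.one_rpow]
  -- now three cases
  rcases eq_or_lt_of_le hρ2 with hρe | hρlt
  · -- ρ = 1 : y = z
    have hyz : y = z := (inner_eq_one_iff_of_norm_eq_one hy hz).1 (by rw [← hρ]; exact hρe)
    have hFone : ∀ x : EuclideanSpace ℝ (Fin (k+2)),
        F x * Real.exp (-π * ‖x‖^2) = Real.exp (-π * ‖x‖^2) := by
      intro x
      show sgn ⟪y,x⟫ * sgn ⟪z,x⟫ * Real.exp (-π * ‖x‖^2) = Real.exp (-π * ‖x‖^2)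
      rw [← hyz, sgn_self_mul, one_mul]
    rw [integral_congr_ae (Filter.Eventually.of_forall hFone), gauss_total, hρe,
      Real.arcsin_one]
    field_simp
  rcases eq_or_lt_of_le hρ1 with hρe | hρlt'
  · -- ρ = -1 : z = -y
    have hzy : z = -y := by
      have h1 : ⟪y, -z⟫ = (1:ℝ) := by
        rw [inner_neg_right, ← hρ, ← hρe]; norm_num
      have h2 : y = -z := (inner_eq_one_iff_of_norm_eq_one hy (by rw [norm_neg]; exact hz)).1 h1
      rw [h2]; simp
    have hynull : volume {x : EuclideanSpace ℝ (Fin (k+2)) | ⟪y, x⟫ = (0:ℝ)} = 0 := by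
      have hker : {x : EuclideanSpace ℝ (Fin (k+2)) | ⟪y, x⟫ = (0:ℝ)}
          = (LinearMap.ker (innerSL ℝ y : EuclideanSpace ℝ (Fin (k+2)) →ₗ[ℝ] ℝ) : Set (EuclideanSpace ℝ (Fin (k+2)))) := by
        ext x
        simp [LinearMap.mem_ker]
      rw [hker]
      apply Measure.addHaar_submodule
      intro htop
      have hmem : y ∈ LinearMap.ker (innerSL ℝ y : EuclideanSpace ℝ (Fin (k+2)) →ₗ[ℝ] ℝ) := htop ▸ Submodule.mem_top
      have hyy0 : ⟪y, y⟫ = (0:ℝ) := hmem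
      rw [real_inner_self_eq_norm_mul_norm, hy] at hyy0
      norm_num at hyy0
    have hFneg : ∫ x, F x * Real.exp (-π*‖x‖^2)
        = ∫ x : EuclideanSpace ℝ (Fin (k+2)), -Real.exp (-π*‖x‖^2) := by
      refine integral_congr_ae ?_
      filter_upwards [measure_eq_zero_iff_ae_notMem.1 hynull] with x hx
      have hne : ⟪y, x⟫ ≠ (0:ℝ) := hx
      have hzx : ⟪z, x⟫ = -⟪y, x⟫ := by rw [hzy, inner_neg_left]
      show sgn ⟪y,x⟫ * sgn ⟪z,x⟫ * Real.exp (-π * ‖x‖^2) = -Real.exp (-π * ‖x‖^2)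
      rw [hzx]
      rcases hne.lt_or_gt with h | h
      · rw [sgn_of_neg h, sgn_of_nonneg (by linarith : (0:ℝ) ≤ -⟪y,x⟫)]; ring
      · rw [sgn_of_nonneg h.le, sgn_of_neg (by linarith : -⟪y,x⟫ < 0)]; ring
    rw [hFneg, integral_neg, gauss_total, ← hρe, Real.arcsin_neg, Real.arcsin_one]
    field_simp
  -- main case : -1 < ρ < 1
  set s : ℝ := Real.sqrt (1 - ρ^2) with hs
  have hs0 : 0 < s := Real.sqrt_pos.2 (by nlinarith)
  have hs2 : s^2 = 1 - ρ^2 := Real.sq_sqrt (by nlinarith)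
  have hyy : ⟪y, y⟫ = (1:ℝ) := by rw [real_inner_self_eq_norm_mul_norm, hy]; norm_num
  have hzz : ⟪z, z⟫ = (1:ℝ) := by rw [real_inner_self_eq_norm_mul_norm, hz]; norm_num
  have hzy' : ⟪z, y⟫ = ρ := by rw [real_inner_comm, ← hρ]
  set y' : EuclideanSpace ℝ (Fin (k+2)) := s⁻¹ • (z - ρ • y) with hy'
  have hyy' : ⟪y, y'⟫ = (0:ℝ) := by
    rw [hy', real_inner_smul_right, inner_sub_right, real_inner_smul_right, hyy, ← hρ]
    ring
  have hy'y : ⟪y', y⟫ = (0:ℝ) := by rw [real_inner_comm]; exact hyy'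
  have hy'y' : ⟪y', y'⟫ = (1:ℝ) := by
    rw [hy', real_inner_smul_right, real_inner_smul_left, inner_sub_right, inner_sub_left,
      inner_sub_left, real_inner_smul_right, real_inner_smul_right, real_inner_smul_left,
      real_inner_smul_left, hyy, hzz, hzy', ← hρ]
    field_simp
    nlinarith [hs2]
  have hzdecomp : z = ρ • y + s • y' := by
    rw [hy', smul_inv_smul₀ hs0.ne']
    abel
  -- orthonormal basis extension
  set v : Fin (k+2) → EuclideanSpace ℝ (Fin (k+2)) := fun i => if i = 0 then y else y' with hv
  have h01 : (0 : Fin (k+2)) ≠ 1 := by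
    intro h
    have := congrArg Fin.val h
    simp at this
  have hvon : Orthonormal ℝ (Set.restrict {0, 1} v) := by
    rw [orthonormal_iff_ite]
    rintro ⟨i, hi⟩ ⟨j, hj⟩
    simp only [Set.mem_insert_iff, Set.mem_singleton_iff] at hi hj
    rcases hi with rfl | rfl <;> rcases hj with rfl | rfl <;>
      simp [Set.restrict, hv, h01, h01.symm, Subtype.mk_eq_mk, hyy, hyy', hy'y, hy'y', hy,
        (by have h := real_inner_self_eq_norm_sq y'; rw [hy'y'] at h; nlinarith [norm_nonneg y'] : ‖y'‖ = 1)]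
  have hcard : Module.finrank ℝ (EuclideanSpace ℝ (Fin (k+2))) = Fintype.card (Fin (k+2)) := by
    simp [finrank_euclideanSpace_fin]
  obtain ⟨b, hb⟩ := hvon.exists_orthonormalBasis_extension_of_card_eq hcard
  have hb0 : b 0 = y := by
    have := hb 0 (by simp)
    simpa [hv] using this
  have hb1 : b 1 = y' := by
    have := hb 1 (by simp)
    simpa [hv, h01.symm] using this
  -- transfer via the isometry b.repr.symm
  have hmp := b.measurePreserving_repr_symm
  have htrans := hmp.integral_comp (b.repr.symm.toHomeomorph.measurableEmbedding)
    (fun x => F x * Real.exp (-π * ‖x‖^2))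
  rw [← htrans]
  have hcoordy : ∀ u : EuclideanSpace ℝ (Fin (k+2)), ⟪y, b.repr.symm u⟫ = u 0 := by
    intro u
    rw [← hb0, ← b.repr.inner_map_map (b 0) (b.repr.symm u),
      LinearIsometryEquiv.apply_symm_apply, b.repr_self]
    rw [EuclideanSpace.inner_single_left]
    simp
  have hcoordy' : ∀ u : EuclideanSpace ℝ (Fin (k+2)), ⟪y', b.repr.symm u⟫ = u 1 := by
    intro u
    rw [← hb1, ← b.repr.inner_map_map (b 1) (b.repr.symm u),
      LinearIsometryEquiv.apply_symm_apply, b.repr_self]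
    rw [EuclideanSpace.inner_single_left]
    simp
  have hcoordz : ∀ u : EuclideanSpace ℝ (Fin (k+2)),
      ⟪z, b.repr.symm u⟫ = ρ * u 0 + s * u 1 := by
    intro u
    rw [hzdecomp, inner_add_left, real_inner_smul_left, real_inner_smul_left, hcoordy, hcoordy']
  have hstep : ∀ u : EuclideanSpace ℝ (Fin (k+2)),
      F (b.repr.symm u) * Real.exp (-π * ‖b.repr.symm u‖^2)
        = (sgn (u 0) * sgn (ρ * u 0 + s * u 1)) * ∏ i, Real.exp (-π * (u i)^2) := by
    intro u
    show sgn ⟪y, b.repr.symm u⟫ * sgn ⟪z, b.repr.symm u⟫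
        * Real.exp (-π * ‖b.repr.symm u‖^2) = _
    rw [hcoordy, hcoordz, LinearIsometryEquiv.norm_map]
    congr 1
    rw [← Real.exp_sum]
    congr 1
    rw [EuclideanSpace.norm_eq, Real.sq_sqrt (by positivity)]
    rw [Finset.mul_sum]
    refine Finset.sum_congr rfl fun i _ => ?_
    rw [Real.norm_eq_abs, sq_abs]
  rw [integral_congr_ae (Filter.Eventually.of_forall hstep)]
  -- transfer to Pi type
  have hmp2 := EuclideanSpace.volume_preserving_symm_measurableEquiv_toLp (Fin (k+2))
  have htrans2 := hmp2.integral_comp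
    ((MeasurableEquiv.toLp 2 (Fin (k+2) → ℝ)).symm.measurableEmbedding)
    (fun u : Fin (k+2) → ℝ => (sgn (u 0) * sgn (ρ * u 0 + s * u 1)) *
      ∏ i, Real.exp (-π * (u i)^2))
  rw [show (∫ u : EuclideanSpace ℝ (Fin (k+2)),
      (sgn (u 0) * sgn (ρ * u 0 + s * u 1)) * ∏ i, Real.exp (-π * (u i)^2))
    = ∫ x : EuclideanSpace ℝ (Fin (k+2)),
        (fun u : Fin (k+2) → ℝ => (sgn (u 0) * sgn (ρ * u 0 + s * u 1)) *
          ∏ i, Real.exp (-π * (u i)^2)) (((MeasurableEquiv.toLp 2 (Fin (k+2) → ℝ)).symm) x)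
    from rfl, htrans2]
  -- marginalize to 2 coordinates
  rw [marginalize (fun p : ℝ × ℝ => sgn p.1 * sgn (ρ * p.1 + s * p.2)) k]
  -- to ℝ × ℝ
  have hfin2 : (∫ u : Fin 2 → ℝ, (sgn (u 0) * sgn (ρ * u 0 + s * u 1)) *
        ∏ i, Real.exp (-π * (u i)^2))
      = ∫ p : ℝ × ℝ, (sgn p.1 * sgn (ρ * p.1 + s * p.2)) *
          (Real.exp (-π * p.1^2) * Real.exp (-π * p.2^2)) := by
    have hmp3 := measurePreserving_piFinTwo (fun _ : Fin 2 => (volume : Measure ℝ))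
    have htrans3 := hmp3.integral_comp
      ((MeasurableEquiv.piFinTwo (fun _ : Fin 2 => ℝ)).measurableEmbedding)
      (fun p : ℝ × ℝ => (sgn p.1 * sgn (ρ * p.1 + s * p.2)) *
        (Real.exp (-π * p.1^2) * Real.exp (-π * p.2^2)))
    rw [MeasureTheory.volume_pi, Measure.volume_eq_prod, ← htrans3]
    refine integral_congr_ae (Filter.Eventually.of_forall fun u => ?_)
    simp only [Fin.prod_univ_two]
    rfl
  rw [hfin2]
  exact gaussian_2d hρlt' hρlt hs
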